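/- arXiv:hep-th/9412037 — 2 statements merged into one kernel-verified Lean document; each statement's English description precedes it below -/
import Mathlib

section
/- Let G be a finite group and let H and K be distinct subgroups of G. Then there exists a finite-dimensional irreducible complex representation W of G such that the fixed subspace W^H is different from the fixed subspace W^K. (Lemma 3.2 of the paper.) -/
open Representation

/-- The subspace of vectors of a representation `ρ` fixed by every element of
a subgroup `H`. -/
def fixedSubspace {G V : Type*} [Group G] [AddCommGroup V] [Module ℂ V]
    (ρ : Representation ℂ G V) (H : Subgroup G) : Submodule ℂ V where
  carrier := {v | ∀ h ∈ H, ρ h v = v}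
  add_mem' := by
    intro a b ha hb
    intro h hh
    rw [map_add, ha h hh, hb h hh]
  zero_mem' := by
    intro h hh
    rw [map_zero]
  smul_mem' := by
    intro c v hv h hh
    rw [map_smul, hv h hh]

lemma mem_fixedSubspace {G V : Type*} [Group G] [AddCommGroup V] [Module ℂ V]
    (ρ : Representation ℂ G V) (H : Subgroup G) (v : V) :
    v ∈ fixedSubspace ρ H ↔ ∀ h ∈ H, ρ h v = v := Iff.rfl

section
variable {G V : Type*} [Group G] [Fintype G] [AddCommGroup V] [Module ℂ V]

lemma rep_inv_apply (ρ : Representation ℂ G V) (g : G) (v : V) : ρ g⁻¹ (ρ g v) = v := by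
  have : (ρ g⁻¹ * ρ g) v = v := by rw [← map_mul, inv_mul_cancel, map_one]; rfl
  simpa using this

lemma rep_apply_inv (ρ : Representation ℂ G V) (g : G) (v : V) : ρ g (ρ g⁻¹ v) = v := by
  simpa using rep_inv_apply ρ g⁻¹ v

/-- Equivariant projection onto an invariant submodule (Maschke averaging). -/
lemma maschke_proj (ρ : Representation ℂ G V) (U : Submodule ℂ V)
    (hU : ∀ g : G, ∀ v ∈ U, ρ g v ∈ U) :
    ∃ π : V →ₗ[ℂ] V, (∀ v, π v ∈ U) ∧ (∀ u ∈ U, π u = u) ∧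
      (∀ (g : G) (v : V), π (ρ g v) = ρ g (π v)) := by
  obtain ⟨U', hc⟩ := Submodule.exists_isCompl U
  set p : V →ₗ[ℂ] V := U.subtype ∘ₗ (U.linearProjOfIsCompl U' hc) with hp
  have hp1 : ∀ u ∈ U, p u = u := by
    intro u hu
    simp [hp, Submodule.linearProjOfIsCompl_apply_left hc ⟨u, hu⟩]
    exact congrArg Subtype.val (Submodule.linearProjOfIsCompl_apply_left hc ⟨u, hu⟩)
  have hp2 : ∀ v, p v ∈ U := fun v => (U.linearProjOfIsCompl U' hc v).2
  set n : ℂ := (Fintype.card G : ℂ)⁻¹ with hn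
  set π : V →ₗ[ℂ] V := n • ∑ g : G, (ρ g) ∘ₗ p ∘ₗ (ρ g⁻¹) with hπ
  have happly : ∀ v, π v = n • ∑ g : G, ρ g (p (ρ g⁻¹ v)) := by
    intro v; simp [hπ, LinearMap.sum_apply]
  have hcard : (Fintype.card G : ℂ) ≠ 0 := Nat.cast_ne_zero.mpr Fintype.card_ne_zero
  refine ⟨π, ?_, ?_, ?_⟩
  · intro v
    rw [happly]
    exact Submodule.smul_mem _ _ (Submodule.sum_mem _ fun g _ => hU g _ (hp2 _))
  · intro u hu
    rw [happly]
    have h1 : ∀ g : G, ρ g (p (ρ g⁻¹ u)) = u := by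
      intro g
      rw [hp1 _ (hU g⁻¹ u hu), rep_apply_inv]
    rw [Finset.sum_congr rfl fun g _ => h1 g, Finset.sum_const, Finset.card_univ,
      ← Nat.cast_smul_eq_nsmul ℂ, smul_smul, hn, inv_mul_cancel₀ hcard, one_smul]
  · intro g v
    rw [happly, happly, map_smul, map_sum]
    congr 1
    refine (Fintype.sum_equiv (Equiv.mulLeft g)
      (fun x => ρ g (ρ x (p (ρ x⁻¹ v))))
      (fun y => ρ y (p (ρ y⁻¹ (ρ g v)))) fun x => ?_).symm
    simp only [Equiv.coe_mulLeft]
    have h2 : ρ (g * x)⁻¹ (ρ g v) = ρ x⁻¹ v := by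
      have hgx : ((g * x)⁻¹ * g) = x⁻¹ := by group
      calc ρ (g * x)⁻¹ (ρ g v) = (ρ (g*x)⁻¹ * ρ g) v := rfl
        _ = ρ ((g*x)⁻¹ * g) v := by rw [← map_mul]
        _ = ρ x⁻¹ v := by rw [hgx]
    rw [h2]
    calc ρ g (ρ x (p (ρ x⁻¹ v))) = (ρ g * ρ x) (p (ρ x⁻¹ v)) := rfl
      _ = ρ (g * x) (p (ρ x⁻¹ v)) := by rw [← map_mul]
end

section
variable {G V : Type*} [Group G] [Fintype G] [AddCommGroup V] [Module ℂ V]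

set_option linter.unusedSectionVars false in
/-- Inside any invariant submodule containing a `K`-fixed vector that is not `H`-fixed,
there is a "simple" invariant submodule containing such a vector. -/
lemma find_simple (ρ : Representation ℂ G V) [FiniteDimensional ℂ V] (H K : Subgroup G) :
    ∀ (n : ℕ) (W : Submodule ℂ V), Module.finrank ℂ ↥W ≤ n →
      (∀ g : G, ∀ v ∈ W, ρ g v ∈ W) →
      (∃ v ∈ W, (∀ k ∈ K, ρ k v = v) ∧ ¬ (∀ h ∈ H, ρ h v = v)) →
      ∃ S : Submodule ℂ V, (∀ g : G, ∀ v ∈ S, ρ g v ∈ S) ∧ S ≠ ⊥ ∧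
        (∀ q : Submodule ℂ V, (∀ g : G, ∀ v ∈ q, ρ g v ∈ q) → q ≤ S → q = ⊥ ∨ q = S) ∧
        ∃ v ∈ S, (∀ k ∈ K, ρ k v = v) ∧ ¬ (∀ h ∈ H, ρ h v = v) := by
  intro n
  induction n with
  | zero =>
    intro W hrank _ ⟨v, hvW, _, hvH⟩
    exfalso
    have : W = ⊥ := Submodule.finrank_eq_zero.mp (Nat.le_zero.mp hrank)
    rw [this, Submodule.mem_bot] at hvW
    exact hvH (by simp [hvW])
  | succ n ih =>
    intro W hrank hWinv ⟨v, hvW, hvK, hvH⟩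
    by_cases hsplit : ∃ q : Submodule ℂ V, (∀ g : G, ∀ v ∈ q, ρ g v ∈ q) ∧ q ≠ ⊥ ∧ q < W
    · obtain ⟨q, hqinv, hqne, hqlt⟩ := hsplit
      obtain ⟨π, hπ1, hπ2, hπ3⟩ := maschke_proj ρ q hqinv
      have hrankq : Module.finrank ℂ ↥q ≤ n :=
        Nat.lt_succ_iff.mp (lt_of_lt_of_le (Submodule.finrank_lt_finrank_of_lt hqlt) hrank)
      have hv1K : ∀ k ∈ K, ρ k (π v) = π v := fun k hk => by rw [← hπ3, hvK k hk]
      have hv2K : ∀ k ∈ K, ρ k (v - π v) = v - π v := fun k hk => by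
        rw [map_sub, hvK k hk, ← hπ3, hvK k hk]
      by_cases hv1H : ∀ h ∈ H, ρ h (π v) = π v
      · -- then v - π v is not H-fixed; recurse into ker π ⊓ W
        have hv2H : ¬ ∀ h ∈ H, ρ h (v - π v) = v - π v := by
          intro hcon
          apply hvH
          intro h hh
          have h1 := hcon h hh
          rw [map_sub, hv1H h hh] at h1
          exact sub_left_inj.mp h1
        set W₂ : Submodule ℂ V := LinearMap.ker π ⊓ W with hW₂
        have hmem : v - π v ∈ W₂ := by
          constructor
          · show v - π v ∈ LinearMap.ker π
            rw [LinearMap.mem_ker, map_sub, hπ2 _ (hπ1 v), sub_self]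
          · exact Submodule.sub_mem W hvW (le_of_lt hqlt (hπ1 v))
        have hW₂inv : ∀ g : G, ∀ w ∈ W₂, ρ g w ∈ W₂ := by
          intro g w ⟨hw1, hw2⟩
          constructor
          · show ρ g w ∈ LinearMap.ker π
            rw [LinearMap.mem_ker, hπ3, LinearMap.mem_ker.mp hw1, map_zero]
          · exact hWinv g w hw2
        have hW₂lt : W₂ < W := by
          refine lt_of_le_of_ne inf_le_right ?_
          intro heq
          apply hqne
          rw [Submodule.eq_bot_iff]
          intro u hu
          have huW : u ∈ W := le_of_lt hqlt hu
          have : u ∈ LinearMap.ker π := by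
            rw [← heq] at huW; exact huW.1
          rw [← hπ2 u hu]
          exact LinearMap.mem_ker.mp this
        have hrank₂ : Module.finrank ℂ ↥W₂ ≤ n :=
          Nat.lt_succ_iff.mp (lt_of_lt_of_le (Submodule.finrank_lt_finrank_of_lt hW₂lt) hrank)
        exact ih W₂ hrank₂ hW₂inv ⟨v - π v, hmem, hv2K, hv2H⟩
      · -- recurse into q
        exact ih q hrankq hqinv ⟨π v, hπ1 v, hv1K, hv1H⟩
    · refine ⟨W, hWinv, ?_, ?_, v, hvW, hvK, hvH⟩
      · intro hbot
        rw [hbot, Submodule.mem_bot] at hvW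
        exact hvH (by simp [hvW])
      · intro q hqinv hqle
        by_contra hcon
        push_neg at hcon
        exact hsplit ⟨q, hqinv, hcon.1, lt_of_le_of_ne hqle hcon.2⟩
end

section
variable {G V : Type*} [Group G] [AddCommGroup V] [Module ℂ V]

/-- The restriction of a representation to an invariant submodule. -/
def resRep (ρ : Representation ℂ G V) (S : Submodule ℂ V)
    (hS : ∀ g : G, ∀ v ∈ S, ρ g v ∈ S) : Representation ℂ G ↥S where
  toFun g := (ρ g).restrict (fun v hv => hS g v hv)
  map_one' := by
    ext v
    simp [LinearMap.restrict_apply]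
  map_mul' g₁ g₂ := by
    ext v
    simp only [LinearMap.restrict_apply, Module.End.mul_apply, map_mul]

@[simp] lemma resRep_apply (ρ : Representation ℂ G V) (S : Submodule ℂ V)
    (hS : ∀ g : G, ∀ v ∈ S, ρ g v ∈ S) (g : G) (v : ↥S) :
    (resRep ρ S hS g v : V) = ρ g (v : V) := rfl
end

set_option linter.unusedSectionVars false in
lemma resRep_simple {G V : Type*} [Group G] [AddCommGroup V] [Module ℂ V]
    (ρ : Representation ℂ G V) (S : Submodule ℂ V)
    (hSinv : ∀ g : G, ∀ v ∈ S, ρ g v ∈ S)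
    (hSsimp : ∀ q : Submodule ℂ V, (∀ g : G, ∀ v ∈ q, ρ g v ∈ q) → q ≤ S → q = ⊥ ∨ q = S)
    (p : Submodule ℂ ↥S) (hp : ∀ g : G, ∀ w ∈ p, resRep ρ S hSinv g w ∈ p) :
    p = ⊥ ∨ p = ⊤ := by
  set q : Submodule ℂ V := p.map S.subtype with hq
  have hqle : q ≤ S := Submodule.map_subtype_le S p
  have hqinv : ∀ g : G, ∀ w ∈ q, ρ g w ∈ q := by
    intro g w hw
    obtain ⟨u, hu, rfl⟩ := hw
    exact ⟨resRep ρ S hSinv g u, hp g u hu, rfl⟩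
  rcases hSsimp q hqinv hqle with hcase | hcase
  · left
    rw [Submodule.eq_bot_iff]
    intro u hu
    have hmem : (u : V) ∈ q := ⟨u, hu, rfl⟩
    rw [hcase, Submodule.mem_bot] at hmem
    exact Subtype.ext hmem
  · right
    rw [Submodule.eq_top_iff']
    intro u
    have hmem : (u : V) ∈ q := by rw [hcase]; exact u.2
    obtain ⟨w, hw, hwu⟩ := hmem
    rwa [← Subtype.ext hwu]

lemma main_half (G : Type) [Group G] [Fintype G] (H K : Subgroup G)
    (hex : ∃ g, g ∈ H ∧ g ∉ K) :
    ∃ W : FDRep ℂ G,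
      (Nontrivial W ∧
        ∀ p : Submodule ℂ W, (∀ g : G, ∀ w ∈ p, W.ρ g w ∈ p) → p = ⊥ ∨ p = ⊤) ∧
      fixedSubspace W.ρ H ≠ fixedSubspace W.ρ K := by
  obtain ⟨h₀, hh₀H, hh₀K⟩ := hex
  set ρ := Representation.ofMulAction ℂ G (G ⧸ K) with hρ
  haveI : Finite (G ⧸ K) := Quotient.finite _
  haveI : FiniteDimensional ℂ (MonoidAlgebra ℂ (G ⧸ K)) :=
    Module.Finite.equiv ((MonoidAlgebra.coeffLinearEquiv ℂ).trans
      (Finsupp.linearEquivFunOnFinite ℂ ℂ (G ⧸ K))).symm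
  set v₀ : MonoidAlgebra ℂ (G ⧸ K) := MonoidAlgebra.single ((1 : G) : G ⧸ K) (1 : ℂ) with hv₀
  have hv₀K : ∀ k ∈ K, ρ k v₀ = v₀ := by
    intro k hk
    rw [hv₀, hρ, Representation.ofMulAction_single]
    congr 1
    rw [MulAction.Quotient.smul_mk]
    exact QuotientGroup.eq.mpr (by simpa using hk)
  have hv₀H : ¬ ∀ h ∈ H, ρ h v₀ = v₀ := by
    intro hcon
    have := hcon h₀ hh₀H
    rw [hv₀, hρ, Representation.ofMulAction_single] at this
    have heq := MonoidAlgebra.single_left_injective (one_ne_zero (α := ℂ)) this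
    rw [MulAction.Quotient.smul_mk] at heq
    apply hh₀K
    have := QuotientGroup.eq.mp heq
    simpa using this
  obtain ⟨S, hSinv, hSne, hSsimp, v, hvS, hvK, hvH⟩ :=
    find_simple ρ H K (Module.finrank ℂ (MonoidAlgebra ℂ (G ⧸ K))) ⊤
      (Submodule.finrank_le ⊤)
      (fun g v _ => Submodule.mem_top) ⟨v₀, Submodule.mem_top, hv₀K, hv₀H⟩
  refine ⟨FDRep.of (resRep ρ S hSinv), ⟨?_, ?_⟩, ?_⟩
  · exact Submodule.nontrivial_iff_ne_bot.mpr hSne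
  · exact fun p hp => resRep_simple ρ S hSinv hSsimp p hp
  · intro hcon
    have hmemK : (⟨v, hvS⟩ : ↥S) ∈ fixedSubspace (resRep ρ S hSinv) K := by
      intro k hk
      exact Subtype.ext (hvK k hk)
    have hcon' : fixedSubspace (resRep ρ S hSinv) H = fixedSubspace (resRep ρ S hSinv) K := hcon
    rw [← hcon'] at hmemK
    apply hvH
    intro h hh
    exact congrArg Subtype.val (hmemK h hh)


/-- **Lemma 3.2.** If `H` and `K` are distinct subgroups of a finite group `G`,
then there is a finite-dimensional irreducible complex representation `W` of `G`
with `W^H ≠ W^K`. -/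
theorem distinct_subgroups_distinct_invariants
    (G : Type) [Group G] [Fintype G] (H K : Subgroup G) (hHK : H ≠ K) :
    ∃ W : FDRep ℂ G,
      (Nontrivial W ∧
        ∀ p : Submodule ℂ W, (∀ g : G, ∀ w ∈ p, W.ρ g w ∈ p) → p = ⊥ ∨ p = ⊤) ∧
      fixedSubspace W.ρ H ≠ fixedSubspace W.ρ K := by
  by_cases hle : H ≤ K
  · have hnle : ¬ K ≤ H := fun hcon => hHK (le_antisymm hle hcon)
    obtain ⟨g, hgK, hgH⟩ := SetLike.not_le_iff_exists.mp hnle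
    obtain ⟨W, hW, hne⟩ := main_half G K H ⟨g, hgK, hgH⟩
    exact ⟨W, hW, hne.symm⟩
  · obtain ⟨g, hgH, hgK⟩ := SetLike.not_le_iff_exists.mp hle
    exact main_half G H K ⟨g, hgH, hgK⟩
end

section
/- Let p ≥ 1 be an integer, let W_0, W_1, ..., W_{p-1} be nonzero finite-dimensional complex vector spaces indexed by ℤ/pℤ, and let B = ∏_{i ∈ ℤ/pℤ} End(W_i) be the product algebra. Let σ be a ℂ-algebra automorphism of B with σ^p = id which shifts the factors cyclically, i.e., σ maps the ideal B_i = End(W_i) (embedded as the tuples vanishing in all other coordinates) onto B_{i+1} for every i. Let λ = e^{2πi/p} and for j ∈ ℤ set B^j = { b ∈ B : σ(b) = λ^j b } (the λ^j-eigenspace of σ on B). Then for every i, every j, and every nonzero vector w ∈ W_i, one has B^j · w = W_i, where b ∈ B acts on W_i through the i-th coordinate projection B → End(W_i). In other words, each eigenspace of σ acts transitively (irreducibly) on each W_i. (Eigenspace transitivity step in the proof of Theorem 6.1.) -/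
/-- **Eigenspace transitivity** (step in the proof of Theorem 6.1).

Let `W i` (`i ∈ ℤ/p`) be nonzero finite-dimensional complex vector spaces,
`B = ∏ i, End(W i)`, and `σ` a `ℂ`-algebra automorphism of `B` with `σ^p = 1`
mapping each ideal `B_i = End(W i)` (the tuples vanishing in the other
coordinates) onto `B_{i+1}`.  Let `λ = exp(2πi/p)`.  Then for every `i`, every
`j : ℤ`, and every nonzero `w ∈ W i`, the eigenspace
`B^j = {b | σ b = λ^j • b}` satisfies `B^j • w = W i`, where `b ∈ B` acts on
`W i` through the `i`-th coordinate projection. -/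
theorem eigenspace_acts_transitively
    (p : ℕ) (hp : 1 ≤ p)
    (W : ZMod p → Type) [∀ i, AddCommGroup (W i)] [∀ i, Module ℂ (W i)]
    (hW : ∀ i, Nontrivial (W i)) (hfd : ∀ i, FiniteDimensional ℂ (W i))
    (σ : ((i : ZMod p) → Module.End ℂ (W i)) ≃ₐ[ℂ] ((i : ZMod p) → Module.End ℂ (W i)))
    (hσp : σ ^ p = 1)
    (hshift : ∀ i : ZMod p,
      ⇑σ '' {b : (i : ZMod p) → Module.End ℂ (W i) | ∀ j ≠ i, b j = 0} =
        {b : (i : ZMod p) → Module.End ℂ (W i) | ∀ j ≠ i + 1, b j = 0}) :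
    ∀ (i : ZMod p) (j : ℤ) (w : W i), w ≠ 0 → ∀ v : W i,
      ∃ b : (i : ZMod p) → Module.End ℂ (W i),
        σ b = (Complex.exp (2 * Real.pi * Complex.I / (p : ℂ))) ^ j • b ∧
        b i w = v := by
  classical
  haveI : NeZero p := ⟨by omega⟩
  intro i j w hw v
  -- an endomorphism of `W i` sending `w` to `v`
  obtain ⟨f, hf⟩ := (LinearPMap.mkSpanSingleton w v hw : W i →ₗ.[ℂ] W i).toFun.exists_extend
  have hfw : f w = v := by
    have h1 : f w = (LinearPMap.mkSpanSingleton w v hw : W i →ₗ.[ℂ] W i).toFun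
        ⟨w, Submodule.mem_span_singleton_self w⟩ := by
      rw [← hf]; rfl
    rw [h1]
    exact LinearPMap.mkSpanSingleton_apply ℂ ℂ hw v
  set μ : ℂ := (Complex.exp (2 * Real.pi * Complex.I / (p : ℂ))) ^ j with hμ
  have hlam0 : Complex.exp (2 * Real.pi * Complex.I / (p : ℂ)) ≠ 0 := Complex.exp_ne_zero _
  have hμ0 : μ ≠ 0 := zpow_ne_zero _ hlam0
  have hlamp : Complex.exp (2 * Real.pi * Complex.I / (p : ℂ)) ^ p = 1 := by
    rw [← Complex.exp_nat_mul]
    have hp0 : (p : ℂ) ≠ 0 := Nat.cast_ne_zero.mpr (by omega)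
    have : (p : ℂ) * (2 * Real.pi * Complex.I / (p : ℂ)) = 2 * Real.pi * Complex.I := by
      field_simp
    rw [this]
    exact Complex.exp_two_pi_mul_I
  have hμp : μ ^ (p : ℤ) = 1 := by
    rw [hμ, ← zpow_mul, mul_comm j (p : ℤ), zpow_mul, zpow_natCast, hlamp, one_zpow]
  -- the element of `B` supported at `i`
  set b : (i : ZMod p) → Module.End ℂ (W i) := Pi.single i f with hb
  have hbsupp : ∀ l ≠ i, b l = 0 := fun l hl => by rw [hb]; exact Pi.single_eq_of_ne (M := fun i => Module.End ℂ (W i)) hl f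
  -- iterates of σ shift the support
  have hsupp : ∀ k : ℕ, ∀ l ≠ i + (k : ZMod p), ((σ ^ k) b) l = 0 := by
    intro k
    induction k with
    | zero =>
      intro l hl
      simp only [pow_zero, AlgEquiv.one_apply]
      simp only [Nat.cast_zero, add_zero] at hl
      exact hbsupp l hl
    | succ k ih =>
      have hmem : σ ((σ ^ k) b) ∈
          {b' : (i : ZMod p) → Module.End ℂ (W i) | ∀ l ≠ i + (k : ZMod p) + 1, b' l = 0} := by
        rw [← hshift (i + (k : ZMod p))]
        exact ⟨_, ih, rfl⟩
      intro l hl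
      have hrw : (σ ^ (k + 1)) b = σ ((σ ^ k) b) := by
        rw [pow_succ']; rfl
      rw [hrw]
      refine hmem l ?_
      have hcast : ((k + 1 : ℕ) : ZMod p) = (k : ZMod p) + 1 := by push_cast; ring
      rw [hcast, ← add_assoc] at hl
      exact hl
  have hσpb : (σ ^ p) b = b := by rw [hσp]; rfl
  -- the eigenvector
  set F : ℕ → ((i : ZMod p) → Module.End ℂ (W i)) :=
    fun k => μ ^ (1 - (k : ℤ)) • (σ ^ k) b with hF
  set c : (i : ZMod p) → Module.End ℂ (W i) :=
    ∑ k ∈ Finset.range p, μ ^ (-(k : ℤ)) • (σ ^ k) b with hc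
  have hFp0 : F p = F 0 := by
    rw [hF]
    simp only [hσpb, Nat.cast_zero, sub_zero, zpow_one, pow_zero]
    rw [show (1 : ℤ) - (p : ℤ) = 1 + -(p : ℤ) by ring, zpow_add₀ hμ0, zpow_neg, hμp, inv_one,
      mul_one, zpow_one]
    rfl
  refine ⟨c, ?_, ?_⟩
  · -- σ c = μ • c
    have hL : σ c = ∑ k ∈ Finset.range p, F (k + 1) := by
      rw [hc, map_sum]
      refine Finset.sum_congr rfl fun k _ => ?_
      have h1 : σ ((σ ^ k) b) = (σ ^ (k + 1)) b := by rw [pow_succ']; rfl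
      have h2 : (1 : ℤ) - ((k + 1 : ℕ) : ℤ) = -(k : ℤ) := by push_cast; ring
      simp only [hF]
      rw [map_smul, h1, h2]
    have hR : μ • c = ∑ k ∈ Finset.range p, F k := by
      rw [hc, Finset.smul_sum]
      refine Finset.sum_congr rfl fun k _ => ?_
      simp only [hF]
      rw [smul_smul, show (1 : ℤ) - (k : ℤ) = 1 + -(k : ℤ) by ring, zpow_add₀ hμ0, zpow_one]
    rw [hL, hR]
    have h1 := Finset.sum_range_succ' F p
    have h2 := Finset.sum_range_succ F p
    rw [hFp0] at h2
    have := h1.symm.trans h2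
    exact add_right_cancel this
  · -- c i w = v
    have hci : c i = f := by
      rw [hc, Finset.sum_apply]
      rw [Finset.sum_eq_single 0]
      · simp [hb, Pi.single_eq_same]
      · intro k hk hk0
        have hkz : (k : ZMod p) ≠ 0 := by
          rw [Ne, ZMod.natCast_eq_zero_iff]
          intro hdvd
          exact hk0 (Nat.eq_zero_of_dvd_of_lt hdvd (Finset.mem_range.mp hk))
        have : i ≠ i + (k : ZMod p) := by
          intro h
          exact hkz (by linear_combination -h)
        rw [Pi.smul_apply, hsupp k i this, smul_zero]
      · intro h
        exact absurd (Finset.mem_range.mpr (by omega)) h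
    rw [hci, hfw]
end
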